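/- Let A(λ) = λ^α with α ∈ (0,1) and c(v) = v^σ/σ with σ > 1, so (c')⁻¹(y) = y^{1/(σ−1)} for y ≥ 0. Fix x ∈ ℝ and for γ ∈ (0,1) let Λ*_γ(x) be the largest maximizer of λ ↦ R_γ(x, λ) = (x + (1−λ)/λ)·λ^α − γ/λ over (0,1], and let the engagement be E_γ(x) = (Λ*_γ(x))^α · (max{R_γ(x, Λ*_γ(x)), 0})^{1/(σ−1)}. Then: (i) Λ*_γ(x) → 0 as γ → 0⁺; and (ii) as γ → 0⁺, E_γ(x) converges to 0 if α ∈ (1/σ, 1), converges to α^{1/(σ−1)} if α = 1/σ, and tends to +∞ if α ∈ (0, 1/σ). -/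

import Mathlib

open Set Filter Topology

/-- Effective virtual value with attention `A(λ) = λ^α`:
`R_γ(x, λ) = (x + (1−λ)/λ)·λ^α − γ/λ`. -/
noncomputable def Rpow (γ α x l : ℝ) : ℝ := (x + (1 - l) / l) * l ^ α - γ / l

lemma aux_rpow_zero_pos {β : ℝ} (hβ : 0 < β) :
    Tendsto (fun t : ℝ => t ^ β) (𝓝[>] (0:ℝ)) (𝓝 0) := by
  have h : ContinuousAt (fun t : ℝ => t ^ β) 0 :=
    Real.continuousAt_rpow_const 0 β (Or.inr hβ.le)
  have h2 := h.tendsto.mono_left (nhdsWithin_le_nhds (s := Ioi (0:ℝ)))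
  simpa [Real.zero_rpow hβ.ne'] using h2

lemma aux_rpow_zero_neg {β : ℝ} (hβ : β < 0) :
    Tendsto (fun t : ℝ => t ^ β) (𝓝[>] (0:ℝ)) atTop := by
  have h := (tendsto_rpow_atTop (y := -β) (by linarith)).comp tendsto_inv_nhdsGT_zero
  refine h.congr' ?_
  filter_upwards [self_mem_nhdsWithin] with t ht
  have ht0 : (0:ℝ) < t := ht
  simp only [Function.comp_apply]
  rw [Real.inv_rpow ht0.le, ← Real.rpow_neg ht0.le, neg_neg]

lemma aux_deriv (γ α x L : ℝ) (hL0 : 0 < L) (hL1 : L < 1)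
    (hmax : IsLocalMax (Rpow γ α x) L) :
    Rpow γ α x L = L ^ α / L * (α + (1 + α) * (x - 1) * L) := by
  clear hL1
  have hLne : L ≠ 0 := hL0.ne'
  have hd1 : HasDerivAt (fun l : ℝ => (1 - l) / l) (-(1 / L ^ 2)) L := by
    have h := ((hasDerivAt_const L (1:ℝ)).sub (hasDerivAt_id L)).div (hasDerivAt_id L) hLne
    exact h.congr_deriv (by show ((0 - 1) * L - (1 - L) * 1) / L ^ 2 = -(1 / L ^ 2); ring)
  have hd2 : HasDerivAt (fun l : ℝ => x + (1 - l) / l) (-(1 / L ^ 2)) L := by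
    exact hd1.const_add x
  have hd3 : HasDerivAt (fun l : ℝ => l ^ α) (α * L ^ (α - 1)) L :=
    Real.hasDerivAt_rpow_const (Or.inl hLne)
  have hd4 := hd2.mul hd3
  have hd5 : HasDerivAt (fun l : ℝ => γ / l) (-(γ / L ^ 2)) L := by
    have h := (hasDerivAt_const L γ).div (hasDerivAt_id L) hLne
    exact h.congr_deriv (by show (0 * L - γ * 1) / L ^ 2 = -(γ / L ^ 2); ring)
  have hd : HasDerivAt (Rpow γ α x)
      (-(1 / L ^ 2) * L ^ α + (x + (1 - L) / L) * (α * L ^ (α - 1)) - -(γ / L ^ 2)) L :=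
    hd4.sub hd5
  have hzero : -(1 / L ^ 2) * L ^ α + (x + (1 - L) / L) * (α * L ^ (α - 1)) - -(γ / L ^ 2) = 0 := by
    rw [← hd.deriv]
    exact hmax.deriv_eq_zero
  have hp : L ^ (α - 1) = L ^ α / L := Real.rpow_sub_one hLne α
  rw [hp] at hzero
  have h2 : (L:ℝ) ^ 2 ≠ 0 := pow_ne_zero 2 hLne
  have h3 : γ / L ^ 2 = 1 / L ^ 2 * L ^ α - (x + (1 - L) / L) * (α * (L ^ α / L)) := by
    linarith
  rw [div_eq_iff h2] at h3
  have key : γ = L ^ α * ((1 - α) - α * (x - 1) * L) := by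
    rw [h3]; field_simp; ring
  unfold Rpow
  rw [key]
  field_simp
  ring

/-- with `A(λ) = λ^α` (`0 < α < 1`) and `c(v) = v^σ/σ` (`σ > 1`), as
`γ → 0⁺` the optimal quality `Λ*_γ(x) → 0`, and the engagement
`E_γ(x) = Λ*_γ(x)^α · (max{R_γ(x, Λ*_γ(x)), 0})^{1/(σ−1)}` converges to `0` if
`α > 1/σ`, to `α^{1/(σ−1)}` if `α = 1/σ`, and tends to `+∞` if `α < 1/σ`. -/
theorem stmt12
    (α σ x : ℝ) (Lam : ℝ → ℝ)
    (hα0 : 0 < α) (hα1 : α < 1) (hσ : 1 < σ)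
    -- `Lam γ` is the largest maximizer of `λ ↦ R_γ(x,λ)` over `(0,1]`
    (hLam : ∀ γ ∈ Ioo (0:ℝ) 1, Lam γ ∈ Ioc (0:ℝ) 1 ∧
      (∀ l ∈ Ioc (0:ℝ) 1, Rpow γ α x l ≤ Rpow γ α x (Lam γ)) ∧
      (∀ l ∈ Ioc (0:ℝ) 1, Rpow γ α x l = Rpow γ α x (Lam γ) → l ≤ Lam γ)) :
    -- (i) the optimal quality vanishes as γ → 0⁺
    Tendsto Lam (𝓝[>] (0:ℝ)) (𝓝 0) ∧
    -- (ii) the limit of engagement depends on the concavity of attention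
    (1 / σ < α →
      Tendsto (fun γ => Lam γ ^ α * max (Rpow γ α x (Lam γ)) 0 ^ (1 / (σ - 1)))
        (𝓝[>] (0:ℝ)) (𝓝 0)) ∧
    (α = 1 / σ →
      Tendsto (fun γ => Lam γ ^ α * max (Rpow γ α x (Lam γ)) 0 ^ (1 / (σ - 1)))
        (𝓝[>] (0:ℝ)) (𝓝 (α ^ (1 / (σ - 1))))) ∧
    (α < 1 / σ →
      Tendsto (fun γ => Lam γ ^ α * max (Rpow γ α x (Lam γ)) 0 ^ (1 / (σ - 1)))
        (𝓝[>] (0:ℝ)) atTop) := by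
  have hσ1 : (0:ℝ) < σ - 1 := by linarith
  have hσ0 : (0:ℝ) < σ := by linarith
  have hIoo : ∀ᶠ γ in 𝓝[>] (0:ℝ), γ ∈ Ioo (0:ℝ) 1 := Ioo_mem_nhdsGT zero_lt_one
  -- Step B : lower bound on Lam γ ^ (α - 1)
  have hLB : ∀ γ ∈ Ioo (0:ℝ) 1, (1 - γ) * γ ^ (α - 1) + -(2 * |x| + 1) ≤ Lam γ ^ (α - 1) := by
    intro γ hγ
    obtain ⟨⟨hL0, hL1⟩, hmax, -⟩ := hLam γ hγ
    obtain ⟨hγ0, hγ1⟩ := hγ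
    have h1 : Rpow γ α x γ ≤ Rpow γ α x (Lam γ) := hmax γ ⟨hγ0, hγ1.le⟩
    have e1 : Rpow γ α x γ = x * γ ^ α + (1 - γ) * γ ^ (α - 1) - 1 := by
      unfold Rpow
      rw [Real.rpow_sub_one hγ0.ne']
      field_simp
    have e2 : Rpow γ α x (Lam γ) ≤ |x| + Lam γ ^ (α - 1) := by
      unfold Rpow
      have hb1 : (x + (1 - Lam γ) / Lam γ) * Lam γ ^ α
          = x * Lam γ ^ α + (1 - Lam γ) * Lam γ ^ (α - 1) := by
        rw [Real.rpow_sub_one hL0.ne']; field_simp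
      rw [hb1]
      have q1 : x * Lam γ ^ α ≤ |x| := by
        have hle1 : Lam γ ^ α ≤ 1 := Real.rpow_le_one hL0.le hL1 hα0.le
        nlinarith [le_abs_self x, Real.rpow_nonneg hL0.le α, abs_nonneg x]
      have q2 : (1 - Lam γ) * Lam γ ^ (α - 1) ≤ Lam γ ^ (α - 1) := by
        nlinarith [Real.rpow_nonneg hL0.le (α - 1), hL0]
      have q3 : 0 < γ / Lam γ := div_pos hγ0 hL0
      linarith
    have q4 : -|x| ≤ x * γ ^ α := by
      have hle1 : γ ^ α ≤ 1 := Real.rpow_le_one hγ0.le hγ1.le hα0.le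
      nlinarith [neg_abs_le x, Real.rpow_nonneg hγ0.le α, abs_nonneg x]
    rw [e1] at h1
    linarith
  have hTa : Tendsto (fun γ : ℝ => (1 - γ) * γ ^ (α - 1) + -(2 * |x| + 1))
      (𝓝[>] (0:ℝ)) atTop := by
    apply tendsto_atTop_add_const_right
    apply Filter.Tendsto.pos_mul_atTop (by norm_num : (0:ℝ) < 1) ?_ (aux_rpow_zero_neg (by linarith))
    have h : Tendsto (fun γ : ℝ => 1 - γ) (𝓝 (0:ℝ)) (𝓝 (1 - 0)) :=
      tendsto_const_nhds.sub tendsto_id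
    rw [sub_zero] at h
    exact h.mono_left nhdsWithin_le_nhds
  have hT1 : Tendsto (fun γ => Lam γ ^ (α - 1)) (𝓝[>] (0:ℝ)) atTop := by
    apply tendsto_atTop_mono' _ ?_ hTa
    filter_upwards [hIoo] with γ hγ using hLB γ hγ
  -- Step (i)
  have hi : Tendsto Lam (𝓝[>] (0:ℝ)) (𝓝 0) := by
    have h := (tendsto_rpow_neg_atTop (y := (1 - α)⁻¹) (inv_pos.mpr (by linarith))).comp hT1
    apply h.congr'
    filter_upwards [hIoo] with γ hγ
    obtain ⟨⟨hL0, -⟩, -, -⟩ := hLam γ hγ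
    simp only [Function.comp_apply]
    rw [← Real.rpow_mul hL0.le]
    rw [show (α - 1) * -(1 - α)⁻¹ = 1 by
      have h1α : (1:ℝ) - α ≠ 0 := by linarith
      field_simp; ring, Real.rpow_one]
  have hi' : Tendsto Lam (𝓝[>] (0:ℝ)) (𝓝[>] (0:ℝ)) := by
    rw [tendsto_nhdsWithin_iff]
    refine ⟨hi, ?_⟩
    filter_upwards [hIoo] with γ hγ
    exact (hLam γ hγ).1.1
  -- Step F/G : eventual identity for the engagement
  set c : ℝ := (1 + α) * (x - 1) with hc
  set ε : ℝ := min 1 (α / (2 * (|c| + 1))) with hε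
  have hε0 : 0 < ε := lt_min zero_lt_one (by positivity)
  have hEq : ∀ᶠ γ in 𝓝[>] (0:ℝ),
      Lam γ ^ α * max (Rpow γ α x (Lam γ)) 0 ^ (1 / (σ - 1))
        = Lam γ ^ (α + (α - 1) / (σ - 1)) * (α + c * Lam γ) ^ (1 / (σ - 1)) := by
    filter_upwards [hIoo, hi'.eventually (Ioo_mem_nhdsGT hε0)] with γ hγ hLε
    obtain ⟨⟨hL0, -⟩, hmax, -⟩ := hLam γ hγ
    obtain ⟨-, hLε2⟩ := hLε
    have hL1 : Lam γ < 1 := lt_of_lt_of_le hLε2 (min_le_left _ _)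
    have hLε3 : Lam γ < α / (2 * (|c| + 1)) := lt_of_lt_of_le hLε2 (min_le_right _ _)
    -- positivity of α + c * Lam γ
    have hq : α / 2 ≤ α + c * Lam γ := by
      have f1 : -|c| * Lam γ ≤ c * Lam γ :=
        mul_le_mul_of_nonneg_right (neg_abs_le c) hL0.le
      have f2 : |c| * Lam γ ≤ |c| * (α / (2 * (|c| + 1))) :=
        mul_le_mul_of_nonneg_left hLε3.le (abs_nonneg c)
      have f3 : |c| * (α / (2 * (|c| + 1))) ≤ α / 2 := by
        have e : |c| * (α / (2 * (|c| + 1))) = (|c| * α) / (2 * (|c| + 1)) := by ring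
        rw [e, div_le_div_iff₀ (by positivity) two_pos]
        nlinarith [abs_nonneg c, hα0.le]
      linarith
    have hq0 : 0 < α + c * Lam γ := by linarith
    have hlocal : IsLocalMax (Rpow γ α x) (Lam γ) := by
      filter_upwards [isOpen_Ioo.mem_nhds (⟨hL0, hL1⟩ : Lam γ ∈ Ioo (0:ℝ) 1)] with l hl
      exact hmax l ⟨hl.1, hl.2.le⟩
    have hR : Rpow γ α x (Lam γ) = Lam γ ^ α / Lam γ * (α + c * Lam γ) := by
      rw [hc]; exact aux_deriv γ α x (Lam γ) hL0 hL1 hlocal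
    have hRpos : 0 < Rpow γ α x (Lam γ) := by
      rw [hR]
      exact mul_pos (div_pos (Real.rpow_pos_of_pos hL0 α) hL0) hq0
    rw [max_eq_left hRpos.le, hR,
      show Lam γ ^ α / Lam γ = Lam γ ^ (α - 1) from (Real.rpow_sub_one hL0.ne' α).symm,
      Real.mul_rpow (Real.rpow_nonneg hL0.le _) hq0.le,
      ← Real.rpow_mul hL0.le, mul_one_div, ← mul_assoc, ← Real.rpow_add hL0]
  -- limit of the second factor
  have hQ : Tendsto (fun t : ℝ => (α + c * t) ^ (1 / (σ - 1))) (𝓝[>] (0:ℝ))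
      (𝓝 (α ^ (1 / (σ - 1)))) := by
    have hcont : ContinuousAt (fun t : ℝ => (α + c * t) ^ (1 / (σ - 1))) 0 := by
      apply ContinuousAt.rpow_const
      · exact continuousAt_const.add (continuousAt_const.mul continuousAt_id)
      · left; simpa using hα0.ne'
    have h2 := hcont.tendsto.mono_left (nhdsWithin_le_nhds (s := Ioi (0:ℝ)))
    simpa using h2
  have hβeq : α + (α - 1) / (σ - 1) = (α * σ - 1) / (σ - 1) := by
    field_simp
    ring
  refine ⟨hi, ?_, ?_, ?_⟩
  · -- α > 1/σ : limit 0
    intro hcase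
    have hβ : 0 < α + (α - 1) / (σ - 1) := by
      rw [hβeq]
      apply div_pos _ hσ1
      have := (div_lt_iff₀ hσ0).mp hcase
      linarith
    have hT : Tendsto (fun t : ℝ => t ^ (α + (α - 1) / (σ - 1)) * (α + c * t) ^ (1 / (σ - 1)))
        (𝓝[>] (0:ℝ)) (𝓝 0) := by
      simpa using (aux_rpow_zero_pos hβ).mul hQ
    exact (hT.comp hi').congr' (by filter_upwards [hEq] with γ h using h.symm)
  · -- α = 1/σ
    intro hcase
    have hβ : α + (α - 1) / (σ - 1) = 0 := by
      rw [hβeq, hcase]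
      field_simp
      ring
    have hT : Tendsto (fun t : ℝ => t ^ (α + (α - 1) / (σ - 1)) * (α + c * t) ^ (1 / (σ - 1)))
        (𝓝[>] (0:ℝ)) (𝓝 (α ^ (1 / (σ - 1)))) := by
      simp only [hβ, Real.rpow_zero, one_mul]
      exact hQ
    exact (hT.comp hi').congr' (by filter_upwards [hEq] with γ h using h.symm)
  · -- α < 1/σ : atTop
    intro hcase
    have hβ : α + (α - 1) / (σ - 1) < 0 := by
      rw [hβeq]
      apply div_neg_of_neg_of_pos _ hσ1
      have := (lt_div_iff₀ hσ0).mp hcase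
      linarith
    have hT : Tendsto (fun t : ℝ => t ^ (α + (α - 1) / (σ - 1)) * (α + c * t) ^ (1 / (σ - 1)))
        (𝓝[>] (0:ℝ)) atTop :=
      (aux_rpow_zero_neg hβ).atTop_mul_pos (Real.rpow_pos_of_pos hα0 _) hQ
    exact (hT.comp hi').congr' (by filter_upwards [hEq] with γ h using h.symm)
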